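/- Let G_r be an m_r×n_r complex matrix and G_t an m_t×n_t complex matrix, and let L be a natural number. Suppose that for all x₁, x₂ ∈ ℂ^{n_r} each having at most L nonzero components, G_r·x₁ = G_r·x₂ implies x₁ = x₂; and suppose the analogous injectivity property holds for G_t on vectors in ℂ^{n_t} with at most L nonzero components. Then for any two n_r×n_t complex matrices Q₁, Q₂ each having at most L nonzero entries, G_r·Q₁·G_tᵀ = G_r·Q₂·G_tᵀ implies Q₁ = Q₂. In other words, the two-sided measurement map Q ↦ G_r·Q·G_tᵀ is injective on the set of channel matrices with at most L nonzero entries, so the m_r×m_t measurement matrix uniquely determines the sparse channel matrix. -/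

import Mathlib

open Matrix Finset

lemma mulVec_support_card_le {nr nt L : ℕ} (Q : Matrix (Fin nr) (Fin nt) ℂ)
    (hQ : (univ.filter (fun p : Fin nr × Fin nt => Q p.1 p.2 ≠ 0)).card ≤ L)
    (g : Fin nt → ℂ) :
    (univ.filter (fun i => Q.mulVec g i ≠ 0)).card ≤ L := by
  refine le_trans (Finset.card_le_card_of_surjOn Prod.fst ?_) hQ
  intro i hi
  simp only [coe_filter, Set.mem_setOf_eq, mem_univ, true_and] at hi ⊢
  have : ∃ j, Q i j ≠ 0 := by
    by_contra h
    push_neg at h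
    apply hi
    simp [Matrix.mulVec, dotProduct, h]
  obtain ⟨j, hj⟩ := this
  exact ⟨(i, j), hj, rfl⟩

lemma row_support_card_le {nr nt L : ℕ} (Q : Matrix (Fin nr) (Fin nt) ℂ)
    (hQ : (univ.filter (fun p : Fin nr × Fin nt => Q p.1 p.2 ≠ 0)).card ≤ L)
    (i : Fin nr) :
    (univ.filter (fun j => Q i j ≠ 0)).card ≤ L := by
  refine le_trans (Finset.card_le_card_of_injOn (fun j => (i, j)) ?_ ?_) hQ
  · intro j hj
    simp only [coe_filter, Set.mem_setOf_eq, mem_coe, mem_filter, mem_univ, true_and] at hj ⊢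
    exact hj
  · intro a _ b _ h
    exact ((Prod.mk.injEq _ _ _ _).mp h).2


/-- if `G_r` is injective (as `x ↦ G_r·x`) on complex vectors with at most `L`
nonzero components and likewise `G_t`, then the two-sided measurement map
`Q ↦ G_r·Q·G_tᵀ` is injective on `n_r × n_t` complex channel matrices with at most `L`
nonzero entries. -/
theorem stmt9 {mr nr mt nt : ℕ} (Gr : Matrix (Fin mr) (Fin nr) ℂ)
    (Gt : Matrix (Fin mt) (Fin nt) ℂ) (L : ℕ)
    (hGr : ∀ x₁ x₂ : Fin nr → ℂ,
      (univ.filter (fun i => x₁ i ≠ 0)).card ≤ L →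
      (univ.filter (fun i => x₂ i ≠ 0)).card ≤ L →
      Gr.mulVec x₁ = Gr.mulVec x₂ → x₁ = x₂)
    (hGt : ∀ x₁ x₂ : Fin nt → ℂ,
      (univ.filter (fun i => x₁ i ≠ 0)).card ≤ L →
      (univ.filter (fun i => x₂ i ≠ 0)).card ≤ L →
      Gt.mulVec x₁ = Gt.mulVec x₂ → x₁ = x₂)
    (Q₁ Q₂ : Matrix (Fin nr) (Fin nt) ℂ)
    (hQ₁ : (univ.filter (fun p : Fin nr × Fin nt => Q₁ p.1 p.2 ≠ 0)).card ≤ L)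
    (hQ₂ : (univ.filter (fun p : Fin nr × Fin nt => Q₂ p.1 p.2 ≠ 0)).card ≤ L)
    (hmeas : Gr * Q₁ * Gtᵀ = Gr * Q₂ * Gtᵀ) :
    Q₁ = Q₂ := by
  have key : ∀ (Q : Matrix (Fin nr) (Fin nt) ℂ) (j : Fin mt),
      Gr.mulVec (Q.mulVec (fun l => Gt j l)) = fun i => (Gr * Q * Gtᵀ) i j := by
    intro Q j
    funext i
    simp only [Matrix.mulVec, dotProduct, Matrix.mul_apply, Matrix.transpose_apply,
      Finset.mul_sum, Finset.sum_mul]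
    rw [Finset.sum_comm]
    apply Finset.sum_congr rfl
    intro k _
    apply Finset.sum_congr rfl
    intro l _
    ring
  have hcol : ∀ j : Fin mt,
      Q₁.mulVec (fun l => Gt j l) = Q₂.mulVec (fun l => Gt j l) := by
    intro j
    apply hGr _ _ (mulVec_support_card_le Q₁ hQ₁ _) (mulVec_support_card_le Q₂ hQ₂ _)
    rw [key, key, hmeas]
  have hrow : ∀ i, Gt.mulVec (Q₁ i) = Gt.mulVec (Q₂ i) := by
    intro i
    funext j
    have := congrFun (hcol j) i
    simpa [Matrix.mulVec, dotProduct, mul_comm] using this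
  ext i j
  exact congrFun (hGt (Q₁ i) (Q₂ i) (row_support_card_le Q₁ hQ₁ i)
    (row_support_card_le Q₂ hQ₂ i) (hrow i)) j
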